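/- Let G be a GHZ multigraph with a 2-vertex cut {u,v} separating A (odd size) from B, and suppose there are at least 3 feasible monochromatic vertex colourings. Then there exist two of these colours, say 1 and 2, such that w(2_A 1_u)·w(2_B 1_v)·w(2_A 1_v)·w(2_B 1_u) ≠ 0, where w(i_X j_y) denotes the weight of the colouring assigning colour i to all of X and colour j to y in the induced subgraph G[X∪{y}]. -/

import Mathlib

open scoped Classical

/-- An edge-coloured edge-weighted multigraph (no self-loops) on vertex set `V`.
Each edge `e` has two endpoints `fst e`, `snd e`, a colour on each of its two
half-edges (`cf e` at `fst e`, `cs e` at `snd e`) and a complex weight `w e`. -/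
structure EMG (V : Type) [Fintype V] [DecidableEq V] where
  E : Type
  [fintypeE : Fintype E]
  fst : E → V
  snd : E → V
  noLoop : ∀ e, fst e ≠ snd e
  cf : E → ℕ
  cs : E → ℕ
  w : E → ℂ

namespace EMG

attribute [instance] EMG.fintypeE

variable {V : Type} [Fintype V] [DecidableEq V] (G : EMG V)

/-- `e` is incident to vertex `x`. -/
def inc (e : G.E) (x : V) : Prop := G.fst e = x ∨ G.snd e = x

/-- `M` is a perfect matching of the induced subgraph on `S`: all edges of `M`
lie inside `S` and every vertex of `S` is covered exactly once. -/
def IsPMOn (S : Finset V) (M : Finset G.E) : Prop :=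
  (∀ e ∈ M, G.fst e ∈ S ∧ G.snd e ∈ S) ∧ ∀ x ∈ S, ∃! e, e ∈ M ∧ G.inc e x

/-- `M` is a perfect matching of `G`. -/
def IsPM (M : Finset G.E) : Prop := G.IsPMOn Finset.univ M

/-- `M` induces the vertex colouring `vc`: every edge of `M` survives the
filtering by `vc` (half-edge colours agree with the endpoint colours). -/
def Induces (M : Finset G.E) (vc : V → ℕ) : Prop :=
  ∀ e ∈ M, G.cf e = vc (G.fst e) ∧ G.cs e = vc (G.snd e)

/-- The weight of the vertex colouring `vc` on the induced subgraph on `S`: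
the sum over perfect matchings of the filtered subgraph of the products of
edge weights. -/
noncomputable def wcolOn (S : Finset V) (vc : V → ℕ) : ℂ :=
  ∑ M ∈ Finset.univ.filter (fun M => G.IsPMOn S M ∧ G.Induces M vc),
    ∏ e ∈ M, G.w e

/-- The weight of the vertex colouring `vc` in `G`. -/
noncomputable def wcol (vc : V → ℕ) : ℂ := G.wcolOn Finset.univ vc

/-- `vc` is feasible: the subgraph filtered by `vc` has a perfect matching. -/
def Feasible (vc : V → ℕ) : Prop := ∃ M, G.IsPM M ∧ G.Induces M vc

/-- `G` is a GHZ graph: all feasible monochromatic vertex colourings have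
weight `1` and all non-monochromatic vertex colourings have weight `0`. -/
def IsGHZ : Prop :=
  (∀ i : ℕ, G.Feasible (fun _ => i) → G.wcol (fun _ => i) = 1) ∧
  (∀ vc : V → ℕ, (¬ ∃ i : ℕ, ∀ x, vc x = i) → G.wcol vc = 0)

/-- `G` is a g-GHZ graph: all feasible monochromatic vertex colourings have
non-zero weight and all non-monochromatic vertex colourings have weight `0`. -/
def IsgGHZ : Prop :=
  (∀ i : ℕ, G.Feasible (fun _ => i) → G.wcol (fun _ => i) ≠ 0) ∧
  (∀ vc : V → ℕ, (¬ ∃ i : ℕ, ∀ x, vc x = i) → G.wcol vc = 0)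

/-- The dimension: the number of feasible monochromatic vertex colourings. -/
noncomputable def dimension : ℕ := Set.ncard {i : ℕ | G.Feasible (fun _ => i)}

/-- The skeleton of `G`: its underlying simple graph. -/
def skeleton : SimpleGraph V where
  Adj a b := a ≠ b ∧ ∃ e : G.E, (G.fst e = a ∧ G.snd e = b) ∨ (G.fst e = b ∧ G.snd e = a)
  symm := by
    constructor
    intro a b h
    refine ⟨h.1.symm, ?_⟩
    obtain ⟨e, he⟩ := h.2
    exact ⟨e, he.symm⟩
  loopless := by constructor; intro a h; exact h.1 rfl

/-- Replace the weight function of `G`. -/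
def reweight (w' : G.E → ℂ) : EMG V := { G with w := w' }

/-- Delete the edges in `D` from `G`. -/
noncomputable def deleteEdges (D : Finset G.E) : EMG V where
  E := {e : G.E // e ∉ D}
  fst e := G.fst e.1
  snd e := G.snd e.1
  noLoop e := G.noLoop e.1
  cf e := G.cf e.1
  cs e := G.cs e.1
  w e := G.w e.1

/-- `M` is a monochromatic perfect matching of colour `i` (as a set of coloured
edges: all half-edges of `M` carry colour `i`). -/
def MonoPM (M : Finset G.E) (i : ℕ) : Prop :=
  ∀ e ∈ M, G.cf e = i ∧ G.cs e = i

/-- Both endpoints of `e` lie in `S`. -/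
def bothIn (S : Finset V) (e : G.E) : Prop := G.fst e ∈ S ∧ G.snd e ∈ S

/-- `e` joins a vertex of `S` to the vertex `x`. -/
def connectsTo (S : Finset V) (x : V) (e : G.E) : Prop :=
  (G.fst e ∈ S ∧ G.snd e = x) ∨ (G.snd e ∈ S ∧ G.fst e = x)

end EMG

/-- The matching index of a simple graph `H`: the maximum dimension over all
GHZ edge-coloured edge-weighted multigraphs whose skeleton is `H`. -/
noncomputable def matchingIndex {V : Type} [Fintype V] [DecidableEq V]
    (H : SimpleGraph V) : ℕ :=
  sSup {d : ℕ | ∃ G : EMG V, G.skeleton = H ∧ G.IsGHZ ∧ G.dimension = d}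

section AuxLemmas

namespace EMG

variable {V : Type} [Fintype V] [DecidableEq V] (G : EMG V)

lemma wcolOn_congr {S : Finset V} {vc vc' : V → ℕ}
    (h : ∀ x ∈ S, vc x = vc' x) : G.wcolOn S vc = G.wcolOn S vc' := by
  unfold wcolOn
  refine Finset.sum_congr ?_ (fun _ _ => rfl)
  ext M
  simp only [Finset.mem_filter, Finset.mem_univ, true_and, and_congr_right_iff]
  intro hpm
  constructor <;> intro hind e he
  · obtain ⟨h1, h2⟩ := hpm.1 e he
    obtain ⟨c1, c2⟩ := hind e he
    exact ⟨c1.trans (h _ h1), c2.trans (h _ h2)⟩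
  · obtain ⟨h1, h2⟩ := hpm.1 e he
    obtain ⟨c1, c2⟩ := hind e he
    exact ⟨c1.trans (h _ h1).symm, c2.trans (h _ h2).symm⟩

lemma even_card_of_pm {S : Finset V} {M : Finset G.E} (h : G.IsPMOn S M) :
    Even S.card := by
  have key : S.card = 2 * M.card := by
    have h1 : ∀ x ∈ S, (M.filter (fun e => G.inc e x)).card = 1 := by
      intro x hx
      obtain ⟨e, ⟨heM, hei⟩, hu⟩ := h.2 x hx
      rw [Finset.card_eq_one]
      refine ⟨e, ?_⟩
      ext e'
      simp only [Finset.mem_filter, Finset.mem_singleton]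
      exact ⟨fun he' => hu e' he', fun he' => he' ▸ ⟨heM, hei⟩⟩
    have h2 : ∀ e ∈ M, (S.filter (fun x => G.inc e x)).card = 2 := by
      intro e heM
      have hset : S.filter (fun x => G.inc e x) = {G.fst e, G.snd e} := by
        ext x
        simp only [Finset.mem_filter, Finset.mem_insert, Finset.mem_singleton]
        constructor
        · rintro ⟨-, hx | hx⟩
          · exact Or.inl hx.symm
          · exact Or.inr hx.symm
        · rintro (rfl | rfl)
          · exact ⟨(h.1 e heM).1, Or.inl rfl⟩
          · exact ⟨(h.1 e heM).2, Or.inr rfl⟩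
      rw [hset, Finset.card_insert_of_notMem (by simpa using G.noLoop e),
        Finset.card_singleton]
    have hdouble : ∑ x ∈ S, (M.filter (fun e => G.inc e x)).card
        = ∑ e ∈ M, (S.filter (fun x => G.inc e x)).card := by
      simp_rw [Finset.card_filter]
      exact Finset.sum_comm
    calc S.card = ∑ x ∈ S, (M.filter (fun e => G.inc e x)).card := by
          rw [Finset.sum_congr rfl h1, Finset.sum_const, smul_eq_mul, mul_one]
      _ = ∑ e ∈ M, (S.filter (fun x => G.inc e x)).card := hdouble
      _ = 2 * M.card := by
          rw [Finset.sum_congr rfl h2, Finset.sum_const, smul_eq_mul, mul_comm]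
  exact ⟨M.card, by omega⟩

lemma union_pm {S₁ S₂ : Finset V} (hd : Disjoint S₁ S₂) {M₁ M₂ : Finset G.E}
    (h₁ : G.IsPMOn S₁ M₁) (h₂ : G.IsPMOn S₂ M₂) :
    G.IsPMOn (S₁ ∪ S₂) (M₁ ∪ M₂) := by
  constructor
  · intro e he
    rcases Finset.mem_union.1 he with he | he
    · exact ⟨Finset.mem_union_left _ (h₁.1 e he).1, Finset.mem_union_left _ (h₁.1 e he).2⟩
    · exact ⟨Finset.mem_union_right _ (h₂.1 e he).1, Finset.mem_union_right _ (h₂.1 e he).2⟩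
  · intro x hx
    rcases Finset.mem_union.1 hx with hx | hx
    · obtain ⟨e, ⟨heM, hei⟩, hu⟩ := h₁.2 x hx
      refine ⟨e, ⟨Finset.mem_union_left _ heM, hei⟩, ?_⟩
      rintro e' ⟨he', hei'⟩
      rcases Finset.mem_union.1 he' with he' | he'
      · exact hu e' ⟨he', hei'⟩
      · exfalso
        rcases hei' with h' | h'
        · exact Finset.disjoint_left.1 hd hx (h' ▸ (h₂.1 e' he').1)
        · exact Finset.disjoint_left.1 hd hx (h' ▸ (h₂.1 e' he').2)
    · obtain ⟨e, ⟨heM, hei⟩, hu⟩ := h₂.2 x hx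
      refine ⟨e, ⟨Finset.mem_union_right _ heM, hei⟩, ?_⟩
      rintro e' ⟨he', hei'⟩
      rcases Finset.mem_union.1 he' with he' | he'
      · exfalso
        rcases hei' with h' | h'
        · exact Finset.disjoint_right.1 hd hx (h' ▸ (h₁.1 e' he').1)
        · exact Finset.disjoint_right.1 hd hx (h' ▸ (h₁.1 e' he').2)
      · exact hu e' ⟨he', hei'⟩

lemma filter_pm {S₁ S₂ : Finset V} (hd : Disjoint S₁ S₂) {M : Finset G.E}
    (h : G.IsPMOn (S₁ ∪ S₂) M) (hside : ∀ e ∈ M, G.bothIn S₁ e ∨ G.bothIn S₂ e) :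
    G.IsPMOn S₁ (M.filter (fun e => G.bothIn S₁ e)) := by
  constructor
  · intro e he
    exact (Finset.mem_filter.1 he).2
  · intro x hx
    obtain ⟨e, ⟨heM, hei⟩, hu⟩ := h.2 x (Finset.mem_union_left _ hx)
    have hb : G.bothIn S₁ e := by
      rcases hside e heM with hb | hb
      · exact hb
      · exfalso
        rcases hei with h' | h'
        · exact Finset.disjoint_left.1 hd hx (h' ▸ hb.1)
        · exact Finset.disjoint_left.1 hd hx (h' ▸ hb.2)
    refine ⟨e, ⟨Finset.mem_filter.2 ⟨heM, hb⟩, hei⟩, ?_⟩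
    rintro e' ⟨he', hei'⟩
    exact hu e' ⟨(Finset.mem_filter.1 he').1, hei'⟩

lemma wcolOn_mul_wcolOn (S₁ S₂ : Finset V) (hd : Disjoint S₁ S₂) (vc : V → ℕ) :
    G.wcolOn S₁ vc * G.wcolOn S₂ vc =
    ∑ M ∈ Finset.univ.filter (fun M : Finset G.E =>
        (G.IsPMOn (S₁ ∪ S₂) M ∧ G.Induces M vc) ∧
        ∀ e ∈ M, G.bothIn S₁ e ∨ G.bothIn S₂ e),
      ∏ e ∈ M, G.w e := by
  unfold wcolOn
  rw [Finset.sum_mul_sum, ← Finset.sum_product']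
  refine Finset.sum_bij' (fun p _ => p.1 ∪ p.2)
    (fun M _ => (M.filter (fun e => G.bothIn S₁ e), M.filter (fun e => G.bothIn S₂ e)))
    ?_ ?_ ?_ ?_ ?_
  · rintro ⟨M₁, M₂⟩ hp
    rw [Finset.mem_product] at hp
    obtain ⟨hp1, hp2⟩ := hp
    rw [Finset.mem_filter] at hp1 hp2
    obtain ⟨-, h₁, hi₁⟩ := hp1
    obtain ⟨-, h₂, hi₂⟩ := hp2
    rw [Finset.mem_filter]
    refine ⟨Finset.mem_univ _, ⟨G.union_pm hd h₁ h₂, ?_⟩, ?_⟩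
    · intro e he
      rcases Finset.mem_union.1 he with he | he
      · exact hi₁ e he
      · exact hi₂ e he
    · intro e he
      rcases Finset.mem_union.1 he with he | he
      · exact Or.inl (h₁.1 e he)
      · exact Or.inr (h₂.1 e he)
  · intro M hM
    rw [Finset.mem_filter] at hM
    obtain ⟨-, ⟨hpm, hind⟩, hside⟩ := hM
    rw [Finset.mem_product, Finset.mem_filter, Finset.mem_filter]
    have hpm2 : G.IsPMOn (S₂ ∪ S₁) M := by rwa [Finset.union_comm]
    refine ⟨⟨Finset.mem_univ _, G.filter_pm hd hpm hside, ?_⟩,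
      ⟨Finset.mem_univ _, G.filter_pm hd.symm hpm2 (fun e he => (hside e he).symm), ?_⟩⟩
    · exact fun e he => hind e (Finset.mem_filter.1 he).1
    · exact fun e he => hind e (Finset.mem_filter.1 he).1
  · rintro ⟨M₁, M₂⟩ hp
    rw [Finset.mem_product] at hp
    obtain ⟨hp1, hp2⟩ := hp
    rw [Finset.mem_filter] at hp1 hp2
    obtain ⟨-, h₁, -⟩ := hp1
    obtain ⟨-, h₂, -⟩ := hp2
    have key1 : (M₁ ∪ M₂).filter (fun e => G.bothIn S₁ e) = M₁ := by
      ext e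
      simp only [Finset.mem_filter, Finset.mem_union]
      constructor
      · rintro ⟨he | he, hb⟩
        · exact he
        · exact absurd (h₂.1 e he).1 (fun h => Finset.disjoint_left.1 hd hb.1 h)
      · exact fun he => ⟨Or.inl he, h₁.1 e he⟩
    have key2 : (M₁ ∪ M₂).filter (fun e => G.bothIn S₂ e) = M₂ := by
      ext e
      simp only [Finset.mem_filter, Finset.mem_union]
      constructor
      · rintro ⟨he | he, hb⟩
        · exact absurd (h₁.1 e he).1 (fun h => Finset.disjoint_left.1 hd h hb.1)
        · exact he
      · exact fun he => ⟨Or.inr he, h₂.1 e he⟩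
    exact Prod.ext key1 key2
  · intro M hM
    rw [Finset.mem_filter] at hM
    obtain ⟨-, -, hside⟩ := hM
    ext e
    simp only [Finset.mem_union, Finset.mem_filter]
    constructor
    · rintro (⟨he, -⟩ | ⟨he, -⟩) <;> exact he
    · intro he
      rcases hside e he with hb | hb
      · exact Or.inl ⟨he, hb⟩
      · exact Or.inr ⟨he, hb⟩
  · rintro ⟨M₁, M₂⟩ hp
    rw [Finset.mem_product] at hp
    obtain ⟨hp1, hp2⟩ := hp
    rw [Finset.mem_filter] at hp1 hp2
    obtain ⟨-, h₁, -⟩ := hp1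
    obtain ⟨-, h₂, -⟩ := hp2
    have hdM : Disjoint M₁ M₂ := by
      rw [Finset.disjoint_left]
      intro e he1 he2
      exact Finset.disjoint_left.1 hd (h₁.1 e he1).1 (h₂.1 e he2).1
    exact (Finset.prod_union hdM).symm

end EMG

end AuxLemmas

section AuxLemmas2

namespace EMG

variable {V : Type} [Fintype V] [DecidableEq V] (G : EMG V)

lemma three_inc {e : G.E} {x y z : V} (hxy : x ≠ y) (hxz : x ≠ z) (hyz : y ≠ z)
    (h1 : G.inc e x) (h2 : G.inc e y) (h3 : G.inc e z) : False := by
  rcases h1 with h | h <;> rcases h2 with h' | h' <;> rcases h3 with h'' | h'' <;>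
    first
      | exact hxy (h.symm.trans h')
      | exact hxz (h.symm.trans h'')
      | exact hyz (h'.symm.trans h'')

lemma type_of_matched (u v : V) (huv : u ≠ v) (A B : Finset V)
    (hdisj : Disjoint A B)
    (huA : u ∉ A) (huB : u ∉ B) (hvA : v ∉ A) (hvB : v ∉ B)
    (hcover : ∀ x : V, x ∈ A ∨ x ∈ B ∨ x = u ∨ x = v)
    (hsep : ∀ e : G.E, ¬ (G.fst e ∈ A ∧ G.snd e ∈ B) ∧ ¬ (G.fst e ∈ B ∧ G.snd e ∈ A))
    {M : Finset G.E} (hM : G.IsPMOn Finset.univ M)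
    {x0 : V} {e0 : G.E} (hx0 : x0 ∈ A) (he0 : e0 ∈ M)
    (hi0 : G.inc e0 x0) (hiu : G.inc e0 u)
    (hCv : ∀ e ∈ M, G.inc e v → G.fst e ∉ A ∧ G.snd e ∉ A) :
    ∀ e ∈ M, G.bothIn (insert u A) e ∨ G.bothIn (insert v B) e := by
  have uniq : ∀ x : V, ∀ e ∈ M, ∀ e' ∈ M, G.inc e x → G.inc e' x → e = e' := by
    intro x e he e' he' hi hi'
    obtain ⟨f, -, hf⟩ := hM.2 x (Finset.mem_univ x)
    rw [hf e ⟨he, hi⟩, hf e' ⟨he', hi'⟩]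
  have hx0u : x0 ≠ u := fun h => huA (h ▸ hx0)
  have hends : (G.fst e0 = x0 ∧ G.snd e0 = u) ∨ (G.fst e0 = u ∧ G.snd e0 = x0) := by
    rcases hi0 with h | h <;> rcases hiu with h' | h'
    · exact absurd (h.symm.trans h') hx0u
    · exact Or.inl ⟨h, h'⟩
    · exact Or.inr ⟨h', h⟩
    · exact absurd (h.symm.trans h') hx0u
  have hnotv : ¬ G.inc e0 v := by
    intro hv
    rcases hv with h | h
    · rcases hends with ⟨h1, h2⟩ | ⟨h1, h2⟩
      · exact hvA ((h1.symm.trans h) ▸ hx0)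
      · exact huv (h1.symm.trans h)
    · rcases hends with ⟨h1, h2⟩ | ⟨h1, h2⟩
      · exact huv (h2.symm.trans h)
      · exact hvA ((h2.symm.trans h) ▸ hx0)
  intro e he
  rcases hcover (G.fst e) with hp | hp | hp | hp <;>
    rcases hcover (G.snd e) with hq | hq | hq | hq
  -- fst ∈ A
  · exact Or.inl ⟨Finset.mem_insert_of_mem hp, Finset.mem_insert_of_mem hq⟩
  · exact absurd ⟨hp, hq⟩ (hsep e).1
  · exact Or.inl ⟨Finset.mem_insert_of_mem hp, by rw [hq]; exact Finset.mem_insert_self u A⟩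
  · exact absurd hp (hCv e he (Or.inr hq)).1
  -- fst ∈ B
  · exact absurd ⟨hp, hq⟩ (hsep e).2
  · exact Or.inr ⟨Finset.mem_insert_of_mem hp, Finset.mem_insert_of_mem hq⟩
  · exfalso
    have hee : e = e0 := uniq u e he e0 he0 (Or.inr hq) hiu
    subst hee
    rcases hends with ⟨h1, h2⟩ | ⟨h1, h2⟩
    · exact Finset.disjoint_left.1 hdisj hx0 (h1 ▸ hp)
    · exact huB (h1 ▸ hp)
  · exact Or.inr ⟨Finset.mem_insert_of_mem hp, by rw [hq]; exact Finset.mem_insert_self v B⟩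
  -- fst = u
  · exact Or.inl ⟨by rw [hp]; exact Finset.mem_insert_self u A, Finset.mem_insert_of_mem hq⟩
  · exfalso
    have hee : e = e0 := uniq u e he e0 he0 (Or.inl hp) hiu
    subst hee
    rcases hends with ⟨h1, h2⟩ | ⟨h1, h2⟩
    · exact hx0u (h1.symm.trans hp)
    · exact Finset.disjoint_left.1 hdisj (h2 ▸ hx0) hq
  · exact absurd (hp.trans hq.symm) (G.noLoop e)
  · exfalso
    have hee : e = e0 := uniq u e he e0 he0 (Or.inl hp) hiu
    rw [hee] at hq
    exact hnotv (Or.inr hq)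
  -- fst = v
  · exact absurd hq (hCv e he (Or.inl hp)).2
  · exact Or.inr ⟨by rw [hp]; exact Finset.mem_insert_self v B, Finset.mem_insert_of_mem hq⟩
  · exfalso
    have hee : e = e0 := uniq u e he e0 he0 (Or.inr hq) hiu
    rw [hee] at hp
    exact hnotv (Or.inl hp)
  · exact absurd (hp.trans hq.symm) (G.noLoop e)

lemma one_out (u v : V) (huv : u ≠ v) (A B : Finset V)
    (hdisj : Disjoint A B)
    (huA : u ∉ A) (huB : u ∉ B) (hvA : v ∉ A) (hvB : v ∉ B)
    (hcover : ∀ x : V, x ∈ A ∨ x ∈ B ∨ x = u ∨ x = v)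
    (hsep : ∀ e : G.E, ¬ (G.fst e ∈ A ∧ G.snd e ∈ B) ∧ ¬ (G.fst e ∈ B ∧ G.snd e ∈ A))
    (hodd : Odd A.card)
    {M : Finset G.E} (hM : G.IsPMOn Finset.univ M) :
    ((∃ x0 ∈ A, ∃ e0 ∈ M, G.inc e0 x0 ∧ G.inc e0 u) ∧
      (∀ e ∈ M, G.inc e v → G.fst e ∉ A ∧ G.snd e ∉ A)) ∨
    ((∃ x0 ∈ A, ∃ e0 ∈ M, G.inc e0 x0 ∧ G.inc e0 v) ∧
      (∀ e ∈ M, G.inc e u → G.fst e ∉ A ∧ G.snd e ∉ A)) := by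
  have uniq : ∀ x : V, ∀ e ∈ M, ∀ e' ∈ M, G.inc e x → G.inc e' x → e = e' := by
    intro x e he e' he' hi hi'
    obtain ⟨f, -, hf⟩ := hM.2 x (Finset.mem_univ x)
    rw [hf e ⟨he, hi⟩, hf e' ⟨he', hi'⟩]
  set C : Finset V := A.filter (fun x => ∃ e ∈ M, G.inc e x ∧ ¬ G.bothIn A e) with hC
  have hCsub : C ⊆ A := Finset.filter_subset _ _
  have hpmC : G.IsPMOn (A \ C) (M.filter (fun e => G.bothIn (A \ C) e)) := by
    constructor
    · intro e he
      exact (Finset.mem_filter.1 he).2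
    · intro x hx
      obtain ⟨hxA, hxC⟩ := Finset.mem_sdiff.1 hx
      obtain ⟨e, ⟨heM, hei⟩, hu⟩ := hM.2 x (Finset.mem_univ x)
      have hbA : G.bothIn A e := by
        by_contra hb
        exact hxC (Finset.mem_filter.2 ⟨hxA, e, heM, hei, hb⟩)
      have hb : G.bothIn (A \ C) e := by
        constructor
        · refine Finset.mem_sdiff.2 ⟨hbA.1, fun hc => ?_⟩
          obtain ⟨-, f, hf, hfi, hfb⟩ := Finset.mem_filter.1 hc
          exact hfb (by rw [uniq (G.fst e) f hf e heM hfi (Or.inl rfl)]; exact hbA)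
        · refine Finset.mem_sdiff.2 ⟨hbA.2, fun hc => ?_⟩
          obtain ⟨-, f, hf, hfi, hfb⟩ := Finset.mem_filter.1 hc
          exact hfb (by rw [uniq (G.snd e) f hf e heM hfi (Or.inr rfl)]; exact hbA)
      refine ⟨e, ⟨Finset.mem_filter.2 ⟨heM, hb⟩, hei⟩, ?_⟩
      rintro e' ⟨he', hi'⟩
      exact hu e' ⟨(Finset.mem_filter.1 he').1, hi'⟩
  have hCodd : Odd C.card := by
    obtain ⟨k, hk⟩ := G.even_card_of_pm hpmC
    obtain ⟨m, hm⟩ := hodd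
    have hcard := Finset.card_sdiff_add_card_eq_card hCsub
    exact ⟨m - k, by omega⟩
  have hCmem : ∀ x ∈ C, ∃ e ∈ M, G.inc e x ∧ (G.inc e u ∨ G.inc e v) := by
    intro x hx
    obtain ⟨hxA, e, heM, hei, hnb⟩ := Finset.mem_filter.1 hx
    refine ⟨e, heM, hei, ?_⟩
    rcases hei with h | h
    · have hA : G.fst e ∈ A := by rw [h]; exact hxA
      have h1 : G.snd e ∉ A := fun hs => hnb ⟨hA, hs⟩
      have h2 : G.snd e ∉ B := fun hs => (hsep e).1 ⟨hA, hs⟩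
      rcases hcover (G.snd e) with h' | h' | h' | h'
      exacts [absurd h' h1, absurd h' h2, Or.inl (Or.inr h'), Or.inr (Or.inr h')]
    · have hA : G.snd e ∈ A := by rw [h]; exact hxA
      have h1 : G.fst e ∉ A := fun hs => hnb ⟨hs, hA⟩
      have h2 : G.fst e ∉ B := fun hs => (hsep e).2 ⟨hs, hA⟩
      rcases hcover (G.fst e) with h' | h' | h' | h'
      exacts [absurd h' h1, absurd h' h2, Or.inl (Or.inl h'), Or.inr (Or.inl h')]
  have huniq_t : ∀ t : V, t ∉ A → ∀ x ∈ A, ∀ x' ∈ A, ∀ e ∈ M, ∀ e' ∈ M,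
      G.inc e x → G.inc e t → G.inc e' x' → G.inc e' t → x = x' := by
    intro t htA x hxA x' hx'A e he e' he' h1 h2 h3 h4
    have hee : e = e' := uniq t e he e' he' h2 h4
    subst hee
    have hxt : x ≠ t := fun h => htA (h ▸ hxA)
    have hx't : x' ≠ t := fun h => htA (h ▸ hx'A)
    rcases h1 with h | h <;> rcases h3 with h' | h'
    · exact h.symm.trans h'
    · rcases h2 with ht | ht
      · exact absurd (h.symm.trans ht) hxt
      · exact absurd (h'.symm.trans ht) hx't
    · rcases h2 with ht | ht
      · exact absurd (h'.symm.trans ht) hx't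
      · exact absurd (h.symm.trans ht) hxt
    · exact h.symm.trans h'
  have hnotboth : ∀ xu ∈ A, ∀ eu ∈ M, G.inc eu xu → G.inc eu u →
      ∀ xv ∈ A, ∀ ev ∈ M, G.inc ev xv → G.inc ev v → False := by
    intro xu hxuA eu heu hiu hiuu xv hxvA ev hev hiv hivv
    have hxuu : xu ≠ u := fun h => huA (h ▸ hxuA)
    have hxvv : xv ≠ v := fun h => hvA (h ▸ hxvA)
    have hxuv : xu ≠ xv := by
      intro h
      subst h
      have hee : eu = ev := uniq xu eu heu ev hev hiu hiv
      subst hee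
      exact G.three_inc hxuu (fun h => hvA (by rw [← h]; exact hxuA)) huv hiu hiuu hivv
    have hxuC : xu ∈ C := by
      refine Finset.mem_filter.2 ⟨hxuA, eu, heu, hiu, fun hb => ?_⟩
      rcases hiuu with h | h
      · exact huA (h ▸ hb.1)
      · exact huA (h ▸ hb.2)
    have hxvC : xv ∈ C := by
      refine Finset.mem_filter.2 ⟨hxvA, ev, hev, hiv, fun hb => ?_⟩
      rcases hivv with h | h
      · exact hvA (h ▸ hb.1)
      · exact hvA (h ▸ hb.2)
    have hCsub2 : C ⊆ {xu, xv} := by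
      intro x hx
      obtain ⟨e, he, hix, hor'⟩ := hCmem x hx
      have hxA := hCsub hx
      rcases hor' with h | h
      · exact Finset.mem_insert.2 (Or.inl
          (huniq_t u huA x hxA xu hxuA e he eu heu hix h hiu hiuu))
      · refine Finset.mem_insert.2 (Or.inr (Finset.mem_singleton.2
          (huniq_t v hvA x hxA xv hxvA e he ev hev hix h hiv hivv)))
    have hle : C.card ≤ 2 := by
      refine le_trans (Finset.card_le_card hCsub2) ?_
      refine le_trans (Finset.card_insert_le _ _) ?_
      simp
    have hge : 2 ≤ C.card := by
      have hsub' : ({xu, xv} : Finset V) ⊆ C := by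
        intro x hx
        rcases Finset.mem_insert.1 hx with rfl | hx
        · exact hxuC
        · rw [Finset.mem_singleton.1 hx]
          exact hxvC
      have : ({xu, xv} : Finset V).card = 2 := by
        rw [Finset.card_insert_of_notMem (by simp [hxuv]), Finset.card_singleton]
      rw [← this]
      exact Finset.card_le_card hsub'
    obtain ⟨k, hk⟩ := hCodd
    omega
  have hCne : C.Nonempty := by
    refine Finset.card_pos.1 ?_
    obtain ⟨k, hk⟩ := hCodd
    omega
  obtain ⟨x0, hx0C⟩ := hCne
  obtain ⟨e0, he0, hi0, hor⟩ := hCmem x0 hx0C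
  have hx0A : x0 ∈ A := hCsub hx0C
  rcases hor with h | h
  · refine Or.inl ⟨⟨x0, hx0A, e0, he0, hi0, h⟩, ?_⟩
    intro e he hiv
    constructor
    · intro hfA
      exact hnotboth x0 hx0A e0 he0 hi0 h (G.fst e) hfA e he (Or.inl rfl) hiv
    · intro hsA
      exact hnotboth x0 hx0A e0 he0 hi0 h (G.snd e) hsA e he (Or.inr rfl) hiv
  · refine Or.inr ⟨⟨x0, hx0A, e0, he0, hi0, h⟩, ?_⟩
    intro e he hiu
    constructor
    · intro hfA
      exact hnotboth (G.fst e) hfA e he (Or.inl rfl) hiu x0 hx0A e0 he0 hi0 h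
    · intro hsA
      exact hnotboth (G.snd e) hsA e he (Or.inr rfl) hiu x0 hx0A e0 he0 hi0 h

end EMG

end AuxLemmas2

section AuxLemmas3

namespace EMG

variable {V : Type} [Fintype V] [DecidableEq V] (G : EMG V)

lemma split (u v : V) (huv : u ≠ v) (A B : Finset V)
    (hdisj : Disjoint A B)
    (huA : u ∉ A) (huB : u ∉ B) (hvA : v ∉ A) (hvB : v ∉ B)
    (hcover : ∀ x : V, x ∈ A ∨ x ∈ B ∨ x = u ∨ x = v)
    (hsep : ∀ e : G.E, ¬ (G.fst e ∈ A ∧ G.snd e ∈ B) ∧ ¬ (G.fst e ∈ B ∧ G.snd e ∈ A))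
    (hodd : Odd A.card) (vc : V → ℕ) :
    G.wcol vc = G.wcolOn (insert u A) vc * G.wcolOn (insert v B) vc
      + G.wcolOn (insert v A) vc * G.wcolOn (insert u B) vc := by
  have d1 : Disjoint (insert u A) (insert v B) := by
    rw [Finset.disjoint_left]
    intro x hx hy
    rcases Finset.mem_insert.1 hx with rfl | hx <;> rcases Finset.mem_insert.1 hy with h | h
    · exact huv h
    · exact huB h
    · exact hvA (h ▸ hx)
    · exact Finset.disjoint_left.1 hdisj hx h
  have d2 : Disjoint (insert v A) (insert u B) := by
    rw [Finset.disjoint_left]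
    intro x hx hy
    rcases Finset.mem_insert.1 hx with rfl | hx <;> rcases Finset.mem_insert.1 hy with h | h
    · exact huv h.symm
    · exact hvB h
    · exact huA (h ▸ hx)
    · exact Finset.disjoint_left.1 hdisj hx h
  have uu1 : insert u A ∪ insert v B = Finset.univ := by
    ext x
    simp only [Finset.mem_union, Finset.mem_insert, Finset.mem_univ, iff_true]
    rcases hcover x with h | h | h | h
    exacts [Or.inl (Or.inr h), Or.inr (Or.inr h), Or.inl (Or.inl h), Or.inr (Or.inl h)]
  have uu2 : insert v A ∪ insert u B = Finset.univ := by
    ext x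
    simp only [Finset.mem_union, Finset.mem_insert, Finset.mem_univ, iff_true]
    rcases hcover x with h | h | h | h
    exacts [Or.inl (Or.inr h), Or.inr (Or.inr h), Or.inr (Or.inl h), Or.inl (Or.inl h)]
  have htot : ∀ M : Finset G.E, G.IsPMOn Finset.univ M →
      (∀ e ∈ M, G.bothIn (insert u A) e ∨ G.bothIn (insert v B) e) ∨
      (∀ e ∈ M, G.bothIn (insert v A) e ∨ G.bothIn (insert u B) e) := by
    intro M hM
    have hcover' : ∀ x : V, x ∈ A ∨ x ∈ B ∨ x = v ∨ x = u := by
      intro x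
      rcases hcover x with h | h | h | h
      exacts [Or.inl h, Or.inr (Or.inl h), Or.inr (Or.inr (Or.inr h)),
        Or.inr (Or.inr (Or.inl h))]
    rcases G.one_out u v huv A B hdisj huA huB hvA hvB hcover hsep hodd hM with
      ⟨⟨x0, hx0, e0, he0, hi0, hiu⟩, hCv⟩ | ⟨⟨x0, hx0, e0, he0, hi0, hiv⟩, hCu⟩
    · exact Or.inl (G.type_of_matched u v huv A B hdisj huA huB hvA hvB hcover hsep hM
        hx0 he0 hi0 hiu hCv)
    · exact Or.inr (G.type_of_matched v u huv.symm A B hdisj hvA hvB huA huB hcover' hsep hM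
        hx0 he0 hi0 hiv hCu)
  have hexcl : ∀ M : Finset G.E, G.IsPMOn Finset.univ M →
      (∀ e ∈ M, G.bothIn (insert u A) e ∨ G.bothIn (insert v B) e) →
      (∀ e ∈ M, G.bothIn (insert v A) e ∨ G.bothIn (insert u B) e) → False := by
    intro M hM hT1 hT2
    obtain ⟨ev, ⟨hev, hiv⟩, -⟩ := hM.2 v (Finset.mem_univ v)
    have hvnot1 : (v : V) ∉ insert u A := by
      intro h
      rcases Finset.mem_insert.1 h with h | h
      · exact huv h.symm
      · exact hvA h
    have hvnot2 : (v : V) ∉ insert u B := by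
      intro h
      rcases Finset.mem_insert.1 h with h | h
      · exact huv h.symm
      · exact hvB h
    have h1 : G.bothIn (insert v B) ev := by
      rcases hT1 ev hev with h | h
      · exfalso
        rcases hiv with h' | h'
        · exact hvnot1 (h' ▸ h.1)
        · exact hvnot1 (h' ▸ h.2)
      · exact h
    have h2 : G.bothIn (insert v A) ev := by
      rcases hT2 ev hev with h | h
      · exact h
      · exfalso
        rcases hiv with h' | h'
        · exact hvnot2 (h' ▸ h.1)
        · exact hvnot2 (h' ▸ h.2)
    have hf : G.fst ev = v := by
      rcases Finset.mem_insert.1 h1.1 with h | h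
      · exact h
      · rcases Finset.mem_insert.1 h2.1 with h' | h'
        · exact h'
        · exact absurd h (Finset.disjoint_left.1 hdisj h')
    have hs : G.snd ev = v := by
      rcases Finset.mem_insert.1 h1.2 with h | h
      · exact h
      · rcases Finset.mem_insert.1 h2.2 with h' | h'
        · exact h'
        · exact absurd h (Finset.disjoint_left.1 hdisj h')
    exact G.noLoop ev (hf.trans hs.symm)
  have hsplit := Finset.sum_filter_add_sum_filter_not
    (Finset.univ.filter (fun M : Finset G.E => G.IsPMOn Finset.univ M ∧ G.Induces M vc))
    (fun M => ∀ e ∈ M, G.bothIn (insert u A) e ∨ G.bothIn (insert v B) e)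
    (fun M => ∏ e ∈ M, G.w e)
  have e1 : (Finset.univ.filter
        (fun M : Finset G.E => G.IsPMOn Finset.univ M ∧ G.Induces M vc)).filter
        (fun M => ∀ e ∈ M, G.bothIn (insert u A) e ∨ G.bothIn (insert v B) e)
      = Finset.univ.filter (fun M : Finset G.E =>
        (G.IsPMOn (insert u A ∪ insert v B) M ∧ G.Induces M vc) ∧
        ∀ e ∈ M, G.bothIn (insert u A) e ∨ G.bothIn (insert v B) e) := by
    ext M
    simp only [Finset.mem_filter, Finset.mem_univ, true_and, uu1]
  have e2 : (Finset.univ.filter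
        (fun M : Finset G.E => G.IsPMOn Finset.univ M ∧ G.Induces M vc)).filter
        (fun M => ¬ ∀ e ∈ M, G.bothIn (insert u A) e ∨ G.bothIn (insert v B) e)
      = Finset.univ.filter (fun M : Finset G.E =>
        (G.IsPMOn (insert v A ∪ insert u B) M ∧ G.Induces M vc) ∧
        ∀ e ∈ M, G.bothIn (insert v A) e ∨ G.bothIn (insert u B) e) := by
    ext M
    simp only [Finset.mem_filter, Finset.mem_univ, true_and, uu2]
    constructor
    · rintro ⟨⟨hpm, hind⟩, hnt⟩
      exact ⟨⟨hpm, hind⟩, (htot M hpm).resolve_left hnt⟩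
    · rintro ⟨⟨hpm, hind⟩, ht2⟩
      exact ⟨⟨hpm, hind⟩, fun ht1 => hexcl M hpm ht1 ht2⟩
  calc G.wcol vc
      = ∑ M ∈ (Finset.univ.filter
          (fun M : Finset G.E => G.IsPMOn Finset.univ M ∧ G.Induces M vc)).filter
          (fun M => ∀ e ∈ M, G.bothIn (insert u A) e ∨ G.bothIn (insert v B) e),
          ∏ e ∈ M, G.w e
        + ∑ M ∈ (Finset.univ.filter
          (fun M : Finset G.E => G.IsPMOn Finset.univ M ∧ G.Induces M vc)).filter
          (fun M => ¬ ∀ e ∈ M, G.bothIn (insert u A) e ∨ G.bothIn (insert v B) e),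
          ∏ e ∈ M, G.w e := hsplit.symm
    _ = G.wcolOn (insert u A) vc * G.wcolOn (insert v B) vc
      + G.wcolOn (insert v A) vc * G.wcolOn (insert u B) vc := by
        rw [e1, e2, ← G.wcolOn_mul_wcolOn (insert u A) (insert v B) d1 vc,
          ← G.wcolOn_mul_wcolOn (insert v A) (insert u B) d2 vc]

end EMG

end AuxLemmas3

section AuxLemmas4

namespace EMG

variable {V : Type} [Fintype V] [DecidableEq V] (G : EMG V)

lemma key (u v : V) (huv : u ≠ v) (A B : Finset V)
    (hAne : A.Nonempty) (hBne : B.Nonempty)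
    (hdisj : Disjoint A B)
    (huA : u ∉ A) (huB : u ∉ B) (hvA : v ∉ A) (hvB : v ∉ B)
    (hcover : ∀ x : V, x ∈ A ∨ x ∈ B ∨ x = u ∨ x = v)
    (hsep : ∀ e : G.E, ¬ (G.fst e ∈ A ∧ G.snd e ∈ B) ∧ ¬ (G.fst e ∈ B ∧ G.snd e ∈ A))
    (hodd : Odd A.card) (hGHZ : G.IsGHZ) (a b : ℕ) (hab : a ≠ b)
    (ha : G.wcolOn (insert u A) (fun _ => a) * G.wcolOn (insert v B) (fun _ => a) ≠ 0)
    (hb : G.wcolOn (insert u A) (fun _ => b) * G.wcolOn (insert v B) (fun _ => b) ≠ 0) :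
    G.wcolOn (insert u A) (fun x => if x = u then a else b) *
    G.wcolOn (insert v B) (fun x => if x = v then a else b) *
    G.wcolOn (insert v A) (fun x => if x = v then a else b) *
    G.wcolOn (insert u B) (fun x => if x = u then a else b) ≠ 0 := by
  have ha1 : G.wcolOn (insert u A) (fun _ => a) ≠ 0 := left_ne_zero_of_mul ha
  have ha2 : G.wcolOn (insert v B) (fun _ => a) ≠ 0 := right_ne_zero_of_mul ha
  have hb1 : G.wcolOn (insert u A) (fun _ => b) ≠ 0 := left_ne_zero_of_mul hb
  have hb2 : G.wcolOn (insert v B) (fun _ => b) ≠ 0 := right_ne_zero_of_mul hb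
  -- membership facts
  have hvn : (v : V) ∉ insert u A := by
    intro h
    rcases Finset.mem_insert.1 h with h | h
    · exact huv h.symm
    · exact hvA h
  have hBn : ∀ x ∈ B, x ∉ insert u A := by
    intro x hx h
    rcases Finset.mem_insert.1 h with rfl | h
    · exact huB hx
    · exact Finset.disjoint_left.1 hdisj h hx
  have hAne' : ∀ x ∈ A, x ≠ u ∧ x ≠ v := by
    intro x hx
    exact ⟨fun h => huA (h ▸ hx), fun h => hvA (h ▸ hx)⟩
  have hBne' : ∀ x ∈ B, x ≠ u ∧ x ≠ v := by
    intro x hx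
    exact ⟨fun h => huB (h ▸ hx), fun h => hvB (h ▸ hx)⟩
  obtain ⟨xa, hxa⟩ := hAne
  obtain ⟨xb, hxb⟩ := hBne
  -- First colouring: a on A ∪ {u}, b elsewhere
  have hW4 : G.wcolOn (insert u B) (fun x => if x = u then a else b) ≠ 0 := by
    set vc1 : V → ℕ := fun x => if x ∈ insert u A then a else b with hvc1
    have hz : G.wcol vc1 = 0 := by
      refine hGHZ.2 vc1 ?_
      rintro ⟨i, hi⟩
      have h1 : vc1 xa = a := if_pos (Finset.mem_insert_of_mem hxa)
      have h2 : vc1 xb = b := if_neg (hBn xb hxb)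
      exact hab (((h1.symm.trans (hi xa)).trans (h2.symm.trans (hi xb)).symm))
    have hsp := G.split u v huv A B hdisj huA huB hvA hvB hcover hsep hodd vc1
    rw [hz] at hsp
    have c1 : G.wcolOn (insert u A) vc1 = G.wcolOn (insert u A) (fun _ => a) :=
      G.wcolOn_congr (fun x hx => if_pos hx)
    have c2 : G.wcolOn (insert v B) vc1 = G.wcolOn (insert v B) (fun _ => b) := by
      refine G.wcolOn_congr (fun x hx => ?_)
      show (if x ∈ insert u A then a else b) = b
      rcases Finset.mem_insert.1 hx with rfl | hx
      · exact if_neg hvn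
      · exact if_neg (hBn x hx)
    have c3 : G.wcolOn (insert v A) vc1
        = G.wcolOn (insert v A) (fun x => if x = v then b else a) := by
      refine G.wcolOn_congr (fun x hx => ?_)
      show (if x ∈ insert u A then a else b) = if x = v then b else a
      rcases Finset.mem_insert.1 hx with rfl | hx
      · rw [if_neg hvn, if_pos rfl]
      · rw [if_pos (Finset.mem_insert_of_mem hx), if_neg (hAne' x hx).2]
    have c4 : G.wcolOn (insert u B) vc1
        = G.wcolOn (insert u B) (fun x => if x = u then a else b) := by
      refine G.wcolOn_congr (fun x hx => ?_)
      show (if x ∈ insert u A then a else b) = if x = u then a else b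
      rcases Finset.mem_insert.1 hx with rfl | hx
      · rw [if_pos (Finset.mem_insert_self _ _), if_pos rfl]
      · rw [if_neg (hBn x hx), if_neg (hBne' x hx).1]
    rw [c1, c2, c3, c4] at hsp
    intro h0
    rw [h0, mul_zero, add_zero] at hsp
    exact (mul_ne_zero ha1 hb2) hsp.symm
  -- Second colouring: b on A ∪ {u}, a elsewhere
  have hW3 : G.wcolOn (insert v A) (fun x => if x = v then a else b) ≠ 0 := by
    set vc2 : V → ℕ := fun x => if x ∈ insert u A then b else a with hvc2
    have hz : G.wcol vc2 = 0 := by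
      refine hGHZ.2 vc2 ?_
      rintro ⟨i, hi⟩
      have h1 : vc2 xa = b := if_pos (Finset.mem_insert_of_mem hxa)
      have h2 : vc2 xb = a := if_neg (hBn xb hxb)
      exact hab (((h2.symm.trans (hi xb)).trans (h1.symm.trans (hi xa)).symm))
    have hsp := G.split u v huv A B hdisj huA huB hvA hvB hcover hsep hodd vc2
    rw [hz] at hsp
    have c1 : G.wcolOn (insert u A) vc2 = G.wcolOn (insert u A) (fun _ => b) :=
      G.wcolOn_congr (fun x hx => if_pos hx)
    have c2 : G.wcolOn (insert v B) vc2 = G.wcolOn (insert v B) (fun _ => a) := by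
      refine G.wcolOn_congr (fun x hx => ?_)
      show (if x ∈ insert u A then b else a) = a
      rcases Finset.mem_insert.1 hx with rfl | hx
      · exact if_neg hvn
      · exact if_neg (hBn x hx)
    have c3 : G.wcolOn (insert v A) vc2
        = G.wcolOn (insert v A) (fun x => if x = v then a else b) := by
      refine G.wcolOn_congr (fun x hx => ?_)
      show (if x ∈ insert u A then b else a) = if x = v then a else b
      rcases Finset.mem_insert.1 hx with rfl | hx
      · rw [if_neg hvn, if_pos rfl]
      · rw [if_pos (Finset.mem_insert_of_mem hx), if_neg (hAne' x hx).2]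
    have c4 : G.wcolOn (insert u B) vc2
        = G.wcolOn (insert u B) (fun x => if x = u then b else a) := by
      refine G.wcolOn_congr (fun x hx => ?_)
      show (if x ∈ insert u A then b else a) = if x = u then b else a
      rcases Finset.mem_insert.1 hx with rfl | hx
      · rw [if_pos (Finset.mem_insert_self _ _), if_pos rfl]
      · rw [if_neg (hBn x hx), if_neg (hBne' x hx).1]
    rw [c1, c2, c3, c4] at hsp
    intro h0
    rw [h0, zero_mul, add_zero] at hsp
    exact (mul_ne_zero hb1 ha2) hsp.symm
  -- Third colouring: a on {u, v}, b elsewhere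
  have hW12 : G.wcolOn (insert u A) (fun x => if x = u then a else b) *
      G.wcolOn (insert v B) (fun x => if x = v then a else b) ≠ 0 := by
    set vc3 : V → ℕ := fun x => if x = u then a else if x = v then a else b with hvc3
    have hz : G.wcol vc3 = 0 := by
      refine hGHZ.2 vc3 ?_
      rintro ⟨i, hi⟩
      have h1 : vc3 u = a := if_pos rfl
      have h2 : vc3 xa = b := by
        show (if xa = u then a else if xa = v then a else b) = b
        rw [if_neg (hAne' xa hxa).1, if_neg (hAne' xa hxa).2]
      exact hab (((h1.symm.trans (hi u)).trans (h2.symm.trans (hi xa)).symm))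
    have hsp := G.split u v huv A B hdisj huA huB hvA hvB hcover hsep hodd vc3
    rw [hz] at hsp
    have c1 : G.wcolOn (insert u A) vc3
        = G.wcolOn (insert u A) (fun x => if x = u then a else b) := by
      refine G.wcolOn_congr (fun x hx => ?_)
      show (if x = u then a else if x = v then a else b) = if x = u then a else b
      rcases Finset.mem_insert.1 hx with rfl | hx
      · simp
      · rw [if_neg (hAne' x hx).1, if_neg (hAne' x hx).2, if_neg (hAne' x hx).1]
    have c2 : G.wcolOn (insert v B) vc3
        = G.wcolOn (insert v B) (fun x => if x = v then a else b) := by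
      refine G.wcolOn_congr (fun x hx => ?_)
      show (if x = u then a else if x = v then a else b) = if x = v then a else b
      rcases Finset.mem_insert.1 hx with rfl | hx
      · rw [if_neg huv.symm, if_pos rfl]
      · rw [if_neg (hBne' x hx).1, if_neg (hBne' x hx).2]
    have c3 : G.wcolOn (insert v A) vc3
        = G.wcolOn (insert v A) (fun x => if x = v then a else b) := by
      refine G.wcolOn_congr (fun x hx => ?_)
      show (if x = u then a else if x = v then a else b) = if x = v then a else b
      rcases Finset.mem_insert.1 hx with rfl | hx
      · rw [if_neg huv.symm, if_pos rfl]
      · rw [if_neg (hAne' x hx).1, if_neg (hAne' x hx).2]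
    have c4 : G.wcolOn (insert u B) vc3
        = G.wcolOn (insert u B) (fun x => if x = u then a else b) := by
      refine G.wcolOn_congr (fun x hx => ?_)
      show (if x = u then a else if x = v then a else b) = if x = u then a else b
      rcases Finset.mem_insert.1 hx with rfl | hx
      · simp
      · rw [if_neg (hBne' x hx).1, if_neg (hBne' x hx).2, if_neg (hBne' x hx).1]
    rw [c1, c2, c3, c4] at hsp
    intro h0
    rw [h0, zero_add] at hsp
    exact (mul_ne_zero hW3 hW4) hsp.symm
  exact mul_ne_zero (mul_ne_zero hW12 hW3) hW4

end EMG

end AuxLemmas4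

/-- In a GHZ multigraph with a 2-cut `{u,v}` separating `A` (odd) from `B`,
if there are at least three feasible monochromatic colourings then two of
those colours, say `a` (playing `1`) and `b` (playing `2`), satisfy
`w(b_A a_u)·w(b_B a_v)·w(b_A a_v)·w(b_B a_u) ≠ 0`. -/
theorem stmt8 {V : Type} [Fintype V] [DecidableEq V] (G : EMG V)
    (u v : V) (huv : u ≠ v)
    (A B : Finset V)
    (hAne : A.Nonempty) (hBne : B.Nonempty)
    (hdisj : Disjoint A B)
    (huAB : u ∉ A ∧ u ∉ B) (hvAB : v ∉ A ∧ v ∉ B)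
    (hcover : ∀ x : V, x ∈ A ∨ x ∈ B ∨ x = u ∨ x = v)
    (hsep : ∀ e : G.E, ¬ (G.fst e ∈ A ∧ G.snd e ∈ B) ∧ ¬ (G.fst e ∈ B ∧ G.snd e ∈ A))
    (hodd : Odd A.card)
    (hGHZ : G.IsGHZ)
    (i₁ i₂ i₃ : ℕ) (h12 : i₁ ≠ i₂) (h13 : i₁ ≠ i₃) (h23 : i₂ ≠ i₃)
    (hf₁ : G.Feasible (fun _ => i₁)) (hf₂ : G.Feasible (fun _ => i₂))
    (hf₃ : G.Feasible (fun _ => i₃)) :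
    ∃ a b : ℕ, a ≠ b ∧ a ∈ ({i₁, i₂, i₃} : Set ℕ) ∧ b ∈ ({i₁, i₂, i₃} : Set ℕ) ∧
      G.wcolOn (insert u A) (fun x => if x = u then a else b) *
      G.wcolOn (insert v B) (fun x => if x = v then a else b) *
      G.wcolOn (insert v A) (fun x => if x = v then a else b) *
      G.wcolOn (insert u B) (fun x => if x = u then a else b) ≠ 0 := by
  obtain ⟨huA, huB⟩ := huAB
  obtain ⟨hvA, hvB⟩ := hvAB
  have hcover' : ∀ x : V, x ∈ A ∨ x ∈ B ∨ x = v ∨ x = u := by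
    intro x
    rcases hcover x with h | h | h | h
    exacts [Or.inl h, Or.inr (Or.inl h), Or.inr (Or.inr (Or.inr h)),
      Or.inr (Or.inr (Or.inl h))]
  have halt : ∀ i : ℕ, G.Feasible (fun _ => i) →
      (G.wcolOn (insert u A) (fun _ => i) * G.wcolOn (insert v B) (fun _ => i) ≠ 0) ∨
      (G.wcolOn (insert v A) (fun _ => i) * G.wcolOn (insert u B) (fun _ => i) ≠ 0) := by
    intro i hf
    by_contra h
    push_neg at h
    have hs := G.split u v huv A B hdisj huA huB hvA hvB hcover hsep hodd (fun _ => i)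
    rw [hGHZ.1 i hf, h.1, h.2, add_zero] at hs
    exact one_ne_zero hs
  have keyP : ∀ a b : ℕ, a ≠ b →
      G.wcolOn (insert u A) (fun _ => a) * G.wcolOn (insert v B) (fun _ => a) ≠ 0 →
      G.wcolOn (insert u A) (fun _ => b) * G.wcolOn (insert v B) (fun _ => b) ≠ 0 →
      G.wcolOn (insert u A) (fun x => if x = u then a else b) *
      G.wcolOn (insert v B) (fun x => if x = v then a else b) *
      G.wcolOn (insert v A) (fun x => if x = v then a else b) *
      G.wcolOn (insert u B) (fun x => if x = u then a else b) ≠ 0 :=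
    fun a b hab ha hb => G.key u v huv A B hAne hBne hdisj huA huB hvA hvB hcover hsep
      hodd hGHZ a b hab ha hb
  have keyQ : ∀ a b : ℕ, a ≠ b →
      G.wcolOn (insert v A) (fun _ => a) * G.wcolOn (insert u B) (fun _ => a) ≠ 0 →
      G.wcolOn (insert v A) (fun _ => b) * G.wcolOn (insert u B) (fun _ => b) ≠ 0 →
      G.wcolOn (insert u A) (fun x => if x = u then a else b) *
      G.wcolOn (insert v B) (fun x => if x = v then a else b) *
      G.wcolOn (insert v A) (fun x => if x = v then a else b) *
      G.wcolOn (insert u B) (fun x => if x = u then a else b) ≠ 0 := by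
    intro a b hab ha hb
    have hk := G.key v u huv.symm A B hAne hBne hdisj hvA hvB huA huB hcover' hsep
      hodd hGHZ a b hab ha hb
    intro h0
    apply hk
    rw [← h0]
    ring
  rcases halt i₁ hf₁ with h1 | h1 <;> rcases halt i₂ hf₂ with h2 | h2 <;>
    rcases halt i₃ hf₃ with h3 | h3
  · exact ⟨i₁, i₂, h12, by simp, by simp, keyP i₁ i₂ h12 h1 h2⟩
  · exact ⟨i₁, i₂, h12, by simp, by simp, keyP i₁ i₂ h12 h1 h2⟩
  · exact ⟨i₁, i₃, h13, by simp, by simp, keyP i₁ i₃ h13 h1 h3⟩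
  · exact ⟨i₂, i₃, h23, by simp, by simp, keyQ i₂ i₃ h23 h2 h3⟩
  · exact ⟨i₂, i₃, h23, by simp, by simp, keyP i₂ i₃ h23 h2 h3⟩
  · exact ⟨i₁, i₃, h13, by simp, by simp, keyQ i₁ i₃ h13 h1 h3⟩
  · exact ⟨i₁, i₂, h12, by simp, by simp, keyQ i₁ i₂ h12 h1 h2⟩
  · exact ⟨i₁, i₂, h12, by simp, by simp, keyQ i₁ i₂ h12 h1 h2⟩
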